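/- arXiv:2101.07728 — 2 statements merged into one kernel-verified Lean document; each statement's English description precedes it below -/
import Mathlib

section
/- Let f, h : ℝ → ℝ be bounded Lipschitz functions and c_∞ > 0 a constant such that c₀ := inf_x (c_∞ + f(x) - h(x)) > 0 (so the graphs of c_∞ + f and h are at positive distance). Then the operator C₁ defined by C₁[ω](x) = ∫_ℝ ω(x-s) / (s² + (c_∞ + f(x) - h(x-s))²) ds is a bounded linear operator on L²(ℝ), with operator norm bounded by a constant depending only on c₀ and ‖h'‖_∞. -/
open MeasureTheory Set Real
open scoped ENNReal

/-- The operator `C₁[ω](x) = ∫ ω(x-s)/(s² + (c_∞ + f(x) - h(x-s))²) ds` is bounded on `L²(ℝ)`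
when `f, h` are bounded Lipschitz functions whose graphs (shifted by `c_∞`) stay at distance
`c₀ > 0`; the operator norm depends only on `c₀` and the Lipschitz constant `L` of `h`. -/
theorem C1_bounded_on_L2 (c₀ L : ℝ) (hc₀ : 0 < c₀) (hL : 0 ≤ L) :
    ∃ C : ℝ, 0 < C ∧
      ∀ (c_inf : ℝ) (f h : ℝ → ℝ), 0 < c_inf →
        (∃ Mf, ∀ x, |f x| ≤ Mf) → (∃ Mh, ∀ x, |h x| ≤ Mh) →
        (∃ Kf, ∀ x y, |f x - f y| ≤ Kf * |x - y|) →
        (∀ x y, |h x - h y| ≤ L * |x - y|) →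
        (∀ x, c₀ ≤ c_inf + f x - h x) →
        ∀ ω : ℝ → ℝ, MemLp ω 2 volume →
          eLpNorm
              (fun x : ℝ => ∫ s : ℝ, ω (x - s) / (s ^ 2 + (c_inf + f x - h (x - s)) ^ 2))
              2 volume
            ≤ ENNReal.ofReal C * eLpNorm ω 2 volume := by
  have hL1 : (0:ℝ) < L + 1 := by linarith
  set δ : ℝ := c₀ / (2 * (L + 1)) with hδdef
  have hδ : 0 < δ := by positivity
  refine ⟨2 * δ * (4 / c₀ ^ 2) + 2 * (1 / δ), by positivity, ?_⟩
  intro c_inf f h _ _ _ _ hLip hdist ω hω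
  set g : ℝ → ℝ := fun s => if |s| < δ then 4 / c₀ ^ 2 else 1 / s ^ 2 with hgdef
  have hgmeas : Measurable g :=
    Measurable.ite (measurableSet_lt continuous_abs.measurable measurable_const)
      measurable_const (measurable_const.div ((measurable_id.pow_const 2)))
  have hgpos : ∀ s, 0 < g s := by
    intro s
    by_cases hs : |s| < δ
    · simp only [hgdef, if_pos hs]; positivity
    · have hs0 : s ≠ 0 := by
        intro h0
        rw [h0] at hs; simp at hs; linarith
      simp only [hgdef, if_neg hs]; positivity
  set G : ℝ → ℝ≥0∞ := fun s => ENNReal.ofReal (g s) with hGdef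
  have hGmeas : Measurable G := hgmeas.ennreal_ofReal
  -- the integral of G
  have heqOn : EqOn (fun s : ℝ => s ^ (-2:ℝ)) (fun s : ℝ => 1 / s ^ 2) (Ioi δ) := by
    intro s hs
    have h0 : 0 < s := hδ.trans hs
    simp only
    rw [Real.rpow_neg h0.le, Real.rpow_two, one_div]
  have hIoi_int : IntegrableOn (fun s : ℝ => 1 / s ^ 2) (Ioi δ) :=
    (integrableOn_Ioi_rpow_of_lt (by norm_num : (-2:ℝ) < -1) hδ).congr_fun heqOn
      measurableSet_Ioi
  have hIoi_val : ∫ s in Ioi δ, 1 / s ^ 2 = 1 / δ := by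
    rw [← setIntegral_congr_fun measurableSet_Ioi heqOn,
      integral_Ioi_rpow_of_lt (by norm_num) hδ]
    norm_num [Real.rpow_neg_one]
  have hIci : ∫⁻ s in Ici δ, ENNReal.ofReal (1 / s ^ 2) = ENNReal.ofReal (1 / δ) := by
    rw [Measure.restrict_congr_set Ioi_ae_eq_Ici.symm,
      ← ofReal_integral_eq_lintegral_ofReal hIoi_int
        (Filter.Eventually.of_forall fun s => by positivity), hIoi_val]
  have hneg : ∀ F : ℝ → ℝ≥0∞, ∫⁻ x, F (-x) = ∫⁻ x, F x := by
    intro F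
    conv_rhs => rw [← Measure.map_neg_eq_self (volume : Measure ℝ)]
    exact (lintegral_map_equiv F (Homeomorph.neg ℝ).toMeasurableEquiv).symm
  have hIic : ∫⁻ s in Iic (-δ), ENNReal.ofReal (1 / s ^ 2) = ENNReal.ofReal (1 / δ) := by
    rw [← lintegral_indicator measurableSet_Iic _,
      ← hneg ((Iic (-δ)).indicator fun s => ENNReal.ofReal (1 / s ^ 2))]
    have hind : ∀ x : ℝ, (Iic (-δ)).indicator (fun s => ENNReal.ofReal (1 / s ^ 2)) (-x)
        = (Ici δ).indicator (fun s => ENNReal.ofReal (1 / s ^ 2)) x := by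
      intro x
      by_cases hx : δ ≤ x
      · rw [indicator_of_mem (mem_Ici.mpr hx), indicator_of_mem (mem_Iic.mpr (by linarith))]
        simp [neg_sq]
      · rw [indicator_of_notMem (by simpa using hx), indicator_of_notMem (by simpa using hx)]
    simp_rw [hind]
    rw [lintegral_indicator measurableSet_Ici _]
    exact hIci
  have hGle : ∀ s, G s ≤ (Ioo (-δ) δ).indicator (fun _ => ENNReal.ofReal (4 / c₀ ^ 2)) s
      + (Iic (-δ)).indicator (fun s => ENNReal.ofReal (1 / s ^ 2)) s
      + (Ici δ).indicator (fun s => ENNReal.ofReal (1 / s ^ 2)) s := by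
    intro s
    by_cases hs : |s| < δ
    · obtain ⟨h1, h2⟩ := abs_lt.mp hs
      rw [indicator_of_mem (mem_Ioo.mpr ⟨h1, h2⟩)]
      have : G s = ENNReal.ofReal (4 / c₀ ^ 2) := by simp [hGdef, hgdef, if_pos hs]
      rw [this]
      exact le_self_add.trans le_self_add
    · have hG' : G s = ENNReal.ofReal (1 / s ^ 2) := by simp [hGdef, hgdef, if_neg hs]
      rcases le_abs.mp (not_lt.mp hs) with h1 | h1
      · rw [indicator_of_mem (mem_Ici.mpr h1), hG']
        exact le_add_self
      · have : s ∈ Iic (-δ) := by simp only [mem_Iic]; linarith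
        rw [indicator_of_mem (mem_Iic.mpr (by linarith : s ≤ -δ)), hG']
        exact le_add_self.trans le_self_add
  have hIG : ∫⁻ s, G s ≤ ENNReal.ofReal (2 * δ * (4 / c₀ ^ 2) + 2 * (1 / δ)) := by
    have hm1 : Measurable ((Ioo (-δ) δ).indicator fun _ : ℝ => ENNReal.ofReal (4 / c₀ ^ 2)) :=
      measurable_const.indicator measurableSet_Ioo
    have hm2 : Measurable ((Iic (-δ)).indicator fun s : ℝ => ENNReal.ofReal (1 / s ^ 2)) :=
      ((measurable_const.div (measurable_id.pow_const 2)).ennreal_ofReal).indicator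
        measurableSet_Iic
    have hm3 : Measurable ((Ici δ).indicator fun s : ℝ => ENNReal.ofReal (1 / s ^ 2)) :=
      ((measurable_const.div (measurable_id.pow_const 2)).ennreal_ofReal).indicator
        measurableSet_Ici
    calc ∫⁻ s, G s ≤ ∫⁻ s, ((Ioo (-δ) δ).indicator (fun _ => ENNReal.ofReal (4 / c₀ ^ 2)) s
        + (Iic (-δ)).indicator (fun s => ENNReal.ofReal (1 / s ^ 2)) s
        + (Ici δ).indicator (fun s => ENNReal.ofReal (1 / s ^ 2)) s) := lintegral_mono hGle
      _ = ENNReal.ofReal (4 / c₀ ^ 2) * ENNReal.ofReal (2 * δ)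
          + ENNReal.ofReal (1 / δ) + ENNReal.ofReal (1 / δ) := by
        rw [lintegral_add_right _ hm3, lintegral_add_right _ hm2,
          lintegral_indicator measurableSet_Ioo _, lintegral_indicator measurableSet_Iic _,
          lintegral_indicator measurableSet_Ici _, hIci, hIic, setLIntegral_const,
          Real.volume_Ioo]
        ring_nf
      _ ≤ ENNReal.ofReal (2 * δ * (4 / c₀ ^ 2) + 2 * (1 / δ)) := by
        rw [← ENNReal.ofReal_mul (by positivity), ← ENNReal.ofReal_add (by positivity)
          (by positivity), ← ENNReal.ofReal_add (by positivity) (by positivity)]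
        exact ENNReal.ofReal_le_ofReal (le_of_eq (by ring))
  -- kernel bound
  have hker : ∀ x s : ℝ, 0 < s ^ 2 + (c_inf + f x - h (x - s)) ^ 2 ∧
      1 / (s ^ 2 + (c_inf + f x - h (x - s)) ^ 2) ≤ g s := by
    intro x s
    by_cases hs : |s| < δ
    · have hh : |h (x - s) - h x| ≤ L * |s| := by
        have := hLip (x - s) x
        simpa using this
      have hL2 : L * |s| ≤ c₀ / 2 := by
        have h1 : L * |s| ≤ L * δ := mul_le_mul_of_nonneg_left hs.le hL
        have h3 : (L + 1) * δ = c₀ / 2 := by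
          rw [hδdef]; field_simp
        nlinarith
      have hlow : c₀ / 2 ≤ c_inf + f x - h (x - s) := by
        have h1 := hdist x
        have h2 := (abs_le.mp hh).2
        linarith
      have hd : c₀ ^ 2 / 4 ≤ s ^ 2 + (c_inf + f x - h (x - s)) ^ 2 := by
        nlinarith [sq_nonneg s]
      have hd0 : 0 < s ^ 2 + (c_inf + f x - h (x - s)) ^ 2 := by nlinarith
      refine ⟨hd0, ?_⟩
      simp only [hgdef, if_pos hs]
      rw [div_le_div_iff₀ hd0 (by positivity : (0:ℝ) < c₀ ^ 2)]
      nlinarith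
    · have hs' : δ ≤ |s| := not_lt.mp hs
      have hs0 : s ≠ 0 := by
        intro h0; rw [h0] at hs'; simp at hs'; linarith
      have hd0 : 0 < s ^ 2 + (c_inf + f x - h (x - s)) ^ 2 := by positivity
      refine ⟨hd0, ?_⟩
      simp only [hgdef, if_neg hs]
      exact one_div_le_one_div_of_le (by positivity) (by nlinarith [sq_nonneg (c_inf + f x - h (x - s))])
  set W : ℝ → ℝ≥0∞ := fun y => (‖ω y‖₊ : ℝ≥0∞) with hWdef
  have hWaem : AEMeasurable W volume := hω.aestronglyMeasurable.enorm
  -- pointwise bound on the operator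
  have hpt : ∀ x : ℝ, (‖∫ s : ℝ, ω (x - s) / (s ^ 2 + (c_inf + f x - h (x - s)) ^ 2)‖₊ : ℝ≥0∞)
      ≤ ∫⁻ s, G s * W (x - s) := by
    intro x
    refine (enorm_integral_le_lintegral_enorm _).trans (lintegral_mono fun s => ?_)
    obtain ⟨hd0, hb⟩ := hker x s
    calc (‖ω (x - s) / (s ^ 2 + (c_inf + f x - h (x - s)) ^ 2)‖₊ : ℝ≥0∞)
        = ENNReal.ofReal (1 / (s ^ 2 + (c_inf + f x - h (x - s)) ^ 2)) * ENNReal.ofReal |ω (x - s)| := by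
          rw [← enorm_eq_nnnorm, Real.enorm_eq_ofReal_abs, abs_div, abs_of_pos hd0,
            ← ENNReal.ofReal_mul (by positivity)]
          congr 1
          ring
      _ ≤ G s * W (x - s) := by
          refine mul_le_mul' (ENNReal.ofReal_le_ofReal hb) (le_of_eq ?_)
          rw [hWdef]; exact (Real.enorm_eq_ofReal_abs _).symm
  -- Cauchy-Schwarz in s, for each x
  have hWx : ∀ x : ℝ, AEMeasurable (fun s => W (x - s)) volume := fun x =>
    hWaem.comp_quasiMeasurePreserving (quasiMeasurePreserving_sub_left_of_right_invariant volume x)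
  have hCS : ∀ x : ℝ, (∫⁻ s, G s * W (x - s)) ^ (2:ℝ)
      ≤ (∫⁻ s, G s) * ∫⁻ s, G s * W (x - s) ^ (2:ℝ) := by
    intro x
    have key : ∫⁻ s, G s * W (x - s)
        ≤ (∫⁻ s, G s) ^ ((1:ℝ)/2) * (∫⁻ s, G s * W (x - s) ^ (2:ℝ)) ^ ((1:ℝ)/2) := by
      have h1 : ∀ s, G s * W (x - s)
          = (G s) ^ ((1:ℝ)/2) * ((G s * W (x - s) ^ (2:ℝ)) ^ ((1:ℝ)/2)) := by
        intro s
        rw [ENNReal.mul_rpow_of_nonneg _ _ (by norm_num : (0:ℝ) ≤ 1/2),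
          ← ENNReal.rpow_mul, ← mul_assoc,
          ← ENNReal.rpow_add_of_nonneg _ _ (by norm_num : (0:ℝ) ≤ 1/2) (by norm_num)]
        norm_num
      calc ∫⁻ s, G s * W (x - s)
          = ∫⁻ s, (G s) ^ ((1:ℝ)/2) * ((G s * W (x - s) ^ (2:ℝ)) ^ ((1:ℝ)/2)) := by
            simp_rw [h1]
        _ ≤ (∫⁻ s, G s) ^ ((1:ℝ)/2) * (∫⁻ s, G s * W (x - s) ^ (2:ℝ)) ^ ((1:ℝ)/2) :=
            ENNReal.lintegral_mul_norm_pow_le hGmeas.aemeasurable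
              (hGmeas.aemeasurable.mul ((hWx x).pow aemeasurable_const))
              (by norm_num) (by norm_num) (by norm_num)
    calc (∫⁻ s, G s * W (x - s)) ^ (2:ℝ)
        ≤ ((∫⁻ s, G s) ^ ((1:ℝ)/2) * (∫⁻ s, G s * W (x - s) ^ (2:ℝ)) ^ ((1:ℝ)/2)) ^ (2:ℝ) :=
          ENNReal.rpow_le_rpow key (by norm_num)
      _ = (∫⁻ s, G s) * ∫⁻ s, G s * W (x - s) ^ (2:ℝ) := by
          rw [ENNReal.mul_rpow_of_nonneg _ _ (by norm_num : (0:ℝ) ≤ 2),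
            ← ENNReal.rpow_mul, ← ENNReal.rpow_mul]
          norm_num
  -- Fubini / translation invariance
  have hWprod : AEMeasurable (fun p : ℝ × ℝ => W (p.1 - p.2)) (volume.prod volume) :=
    hWaem.comp_quasiMeasurePreserving (quasiMeasurePreserving_sub_of_right_invariant volume volume)
  have hswap : ∫⁻ x, ∫⁻ s, G s * W (x - s) ^ (2:ℝ) = ∫⁻ s, ∫⁻ x, G s * W (x - s) ^ (2:ℝ) := by
    apply lintegral_lintegral_swap
    exact ((hGmeas.comp measurable_snd).aemeasurable).mul (hWprod.pow aemeasurable_const)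
  have hinner : ∀ s : ℝ, ∫⁻ x, G s * W (x - s) ^ (2:ℝ) = G s * ∫⁻ y, W y ^ (2:ℝ) := by
    intro s
    rw [lintegral_const_mul' _ _ ENNReal.ofReal_ne_top]
    congr 1
    exact lintegral_sub_right_eq_self (fun y => W y ^ (2:ℝ)) s
  set I := ∫⁻ s, G s with hIdef
  set N := ∫⁻ y, W y ^ (2:ℝ) with hNdef
  have hItop : I ≠ ⊤ := (hIG.trans_lt ENNReal.ofReal_lt_top).ne
  have hfinal : ∫⁻ x, (‖∫ s : ℝ, ω (x - s) / (s ^ 2 + (c_inf + f x - h (x - s)) ^ 2)‖₊ : ℝ≥0∞) ^ (2:ℝ)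
      ≤ I ^ (2:ℝ) * N := by
    have hII : I ^ (2:ℝ) = I * I := by
      rw [show (2:ℝ) = ((2:ℕ):ℝ) by norm_num, ENNReal.rpow_natCast, sq]
    calc ∫⁻ x, (‖∫ s : ℝ, ω (x - s) / (s ^ 2 + (c_inf + f x - h (x - s)) ^ 2)‖₊ : ℝ≥0∞) ^ (2:ℝ)
        ≤ ∫⁻ x, (∫⁻ s, G s * W (x - s)) ^ (2:ℝ) :=
          lintegral_mono fun x => ENNReal.rpow_le_rpow (hpt x) (by norm_num)
      _ ≤ ∫⁻ x, I * ∫⁻ s, G s * W (x - s) ^ (2:ℝ) := lintegral_mono hCS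
      _ = I * ∫⁻ x, ∫⁻ s, G s * W (x - s) ^ (2:ℝ) := lintegral_const_mul' _ _ hItop
      _ = I * ∫⁻ s, G s * N := by rw [hswap]; simp_rw [hinner]
      _ = I * (I * N) := by rw [lintegral_mul_const _ hGmeas]
      _ = I ^ (2:ℝ) * N := by rw [hII, mul_assoc]
  -- conclude
  rw [eLpNorm_eq_lintegral_rpow_enorm_toReal (by norm_num) (by norm_num),
    eLpNorm_eq_lintegral_rpow_enorm_toReal (p := 2) (by norm_num) (by norm_num)]
  simp only [ENNReal.toReal_ofNat]
  calc (∫⁻ x, (‖∫ s : ℝ, ω (x - s) / (s ^ 2 + (c_inf + f x - h (x - s)) ^ 2)‖₊ : ℝ≥0∞) ^ (2:ℝ)) ^ ((1:ℝ)/2)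
      ≤ (I ^ (2:ℝ) * N) ^ ((1:ℝ)/2) := ENNReal.rpow_le_rpow hfinal (by norm_num)
    _ = I * N ^ ((1:ℝ)/2) := by
        rw [ENNReal.mul_rpow_of_nonneg _ _ (by norm_num : (0:ℝ) ≤ 1/2), ← ENNReal.rpow_mul]
        norm_num
    _ ≤ ENNReal.ofReal (2 * δ * (4 / c₀ ^ 2) + 2 * (1 / δ)) * N ^ ((1:ℝ)/2) :=
        mul_le_mul_left hIG _
    _ = ENNReal.ofReal (2 * δ * (4 / c₀ ^ 2) + 2 * (1 / δ))
        * (∫⁻ x, (‖ω x‖₊ : ℝ≥0∞) ^ (2:ℝ)) ^ ((1:ℝ)/2) := rfl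
end

section
/- Let f : ℝ → ℝ be Lipschitz and α ∈ (0,1). For ζ in the open upper region Ω₊ = {(x,y) : y > f(x)}, let ζ_Γ ∈ Γ_f = {(x,f(x))} realize the distance d(ζ) = |ζ - ζ_Γ| = dist(ζ, Γ_f). Then ∫_{Γ_f} |ξ - ζ_Γ|^α / |ξ - ζ|² |dξ| ≤ 9(1 + ‖f'‖_∞) ∫_ℝ (|s| + d(ζ))^{α-2} ds = C(α, ‖f'‖_∞) d(ζ)^{α-1}, where the arclength integral over Γ_f is parameterized as ξ = (s + x_Γ, f(s + x_Γ)). -/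
open MeasureTheory Set Real

private lemma shift_emb' (d : ℝ) : MeasurableEmbedding (fun x : ℝ => x + d) :=
  (Homeomorph.addRight d).measurableEmbedding

private lemma shift_integrableOn' {d a : ℝ} (hd : 0 < d) (ha : a < -1) :
    IntegrableOn (fun s : ℝ => (s + d) ^ a) (Set.Ioi (0:ℝ)) := by
  have key : IntegrableOn (fun x : ℝ => x ^ a) (Set.Ioi d) := integrableOn_Ioi_rpow_of_lt ha hd
  rw [← map_add_right_eq_self volume d] at key
  have := ((shift_emb' d).integrableOn_map_iff).1 key
  have hpre : (fun x : ℝ => x + d) ⁻¹' (Set.Ioi d) = Set.Ioi 0 := by ext t; simp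
  rwa [hpre] at this

private lemma shift_integral' {d a : ℝ} (hd : 0 < d) (ha : a < -1) :
    ∫ s in Set.Ioi (0:ℝ), (s + d) ^ a = -d ^ (a+1) / (a+1) := by
  have : ∫ x in Set.Ioi d, (fun x : ℝ => x ^ a) x = -d ^ (a+1) / (a+1) :=
    integral_Ioi_rpow_of_lt ha hd
  rw [← map_add_right_eq_self volume d, (shift_emb' d).setIntegral_map] at this
  have hpre : (fun x : ℝ => x + d) ⁻¹' (Set.Ioi d) = Set.Ioi 0 := by ext t; simp
  rwa [hpre] at this

private lemma abs_integrable' {d a : ℝ} (hd : 0 < d) (ha : a < -1) :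
    Integrable (fun s : ℝ => (|s| + d) ^ a) := by
  have hIoi : IntegrableOn (fun s : ℝ => (|s| + d) ^ a) (Set.Ioi (0:ℝ)) := by
    refine (shift_integrableOn' hd ha).congr_fun (fun t ht => ?_) measurableSet_Ioi
    rw [abs_of_pos ht]
  have hIic : IntegrableOn (fun s : ℝ => (|s| + d) ^ a) (Set.Iic (0:ℝ)) := by
    rw [← Measure.map_neg_eq_self (volume : Measure ℝ)]
    have m : MeasurableEmbedding fun x : ℝ => -x := (Homeomorph.neg ℝ).measurableEmbedding
    rw [m.integrableOn_map_iff]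
    simp only [Function.comp_def, abs_neg, neg_preimage, neg_Iic, neg_zero]
    exact (integrableOn_Ici_iff_integrableOn_Ioi).mpr hIoi
  have := hIic.union hIoi
  rwa [Set.Iic_union_Ioi, integrableOn_univ] at this

private lemma abs_integral' {d a : ℝ} (hd : 0 < d) (ha : a < -1) :
    ∫ s : ℝ, (|s| + d) ^ a = 2 * (-d ^ (a+1) / (a+1)) := by
  rw [integral_comp_abs (f := fun u => (u + d) ^ a), shift_integral' hd ha]

/-- A point `(a, b)` of the plane, encoded as the complex number `a + b i` (so that the
norm is the Euclidean norm of `ℝ²`). -/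
noncomputable def planePt (a b : ℝ) : ℂ := Complex.ofReal a + Complex.ofReal b * Complex.I

/-- Arclength estimate over the graph `Γ_f`: if `ζ = (x,y)` lies above the graph of the
Lipschitz function `f` (with `‖f'‖_∞ ≤ K`) and `ζ_Γ = (x_Γ, f(x_Γ))` realizes
`d = dist(ζ, Γ_f)`, then
`∫_{Γ_f} |ξ-ζ_Γ|^α/|ξ-ζ|² |dξ| ≤ 9(1+‖f'‖_∞) ∫_ℝ (|s|+d)^{α-2} ds = C(α,‖f'‖_∞) d^{α-1}`,
the arclength integral being parameterized by `ξ = (s + x_Γ, f(s + x_Γ))`. -/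
theorem graph_arclength_estimate (f : ℝ → ℝ) (K α : ℝ) (hα : α ∈ Set.Ioo (0 : ℝ) 1)
    (hf : Differentiable ℝ f) (hK : ∀ x, |deriv f x| ≤ K)
    (x y xΓ : ℝ) (hy : f x < y)
    (hmin : ∀ x' : ℝ, ‖planePt x y - planePt xΓ (f xΓ)‖ ≤ ‖planePt x y - planePt x' (f x')‖) :
    (∫ s : ℝ,
        (‖planePt (s + xΓ) (f (s + xΓ)) - planePt xΓ (f xΓ)‖ ^ α
            / ‖planePt (s + xΓ) (f (s + xΓ)) - planePt x y‖ ^ 2)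
          * Real.sqrt (1 + deriv f (s + xΓ) ^ 2))
      ≤ 9 * (1 + K) * ∫ s : ℝ, (|s| + ‖planePt x y - planePt xΓ (f xΓ)‖) ^ (α - 2)
    ∧ (∫ s : ℝ, (|s| + ‖planePt x y - planePt xΓ (f xΓ)‖) ^ (α - 2))
        = (2 / (1 - α)) * ‖planePt x y - planePt xΓ (f xΓ)‖ ^ (α - 1) := by
  obtain ⟨hα0, hα1⟩ := hα
  set ζ := planePt x y with hζ
  set ζΓ := planePt xΓ (f xΓ) with hζΓ
  set d := ‖ζ - ζΓ‖ with hdd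
  have hK0 : 0 ≤ K := (abs_nonneg _).trans (hK 0)
  have ha2 : α - 2 < -1 := by linarith
  have hd0 : 0 < d := by
    rw [hdd, norm_pos_iff, sub_ne_zero]
    intro h
    rw [hζ, hζΓ, planePt, planePt, Complex.ext_iff] at h
    simp at h
    obtain ⟨h1, h2⟩ := h
    rw [h1] at hy
    linarith
  have hptwise : ∀ s : ℝ,
      (‖planePt (s + xΓ) (f (s + xΓ)) - ζΓ‖ ^ α
          / ‖planePt (s + xΓ) (f (s + xΓ)) - ζ‖ ^ 2)
        * Real.sqrt (1 + deriv f (s + xΓ) ^ 2)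
      ≤ 9 * (1 + K) * (|s| + d) ^ (α - 2) := by
    intro s
    set ξ := planePt (s + xΓ) (f (s + xΓ)) with hξ
    set r := ‖ξ - ζ‖ with hr'
    have hr : d ≤ r := by rw [hr', norm_sub_rev]; exact hmin (s + xΓ)
    have hr0 : 0 < r := lt_of_lt_of_le hd0 hr
    have htri : ‖ξ - ζΓ‖ ≤ ‖ξ - ζ‖ + ‖ζ - ζΓ‖ := by
      have := dist_triangle ξ ζ ζΓ
      simpa [dist_eq_norm] using this
    have ht2 : ‖ξ - ζΓ‖ ≤ 2 * r := by rw [← hr', ← hdd] at htri; linarith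
    have hre : (ξ - ζΓ).re = s := by
      rw [hξ, hζΓ, planePt, planePt]; simp
    have hs : |s| ≤ ‖ξ - ζΓ‖ := by
      calc |s| = |(ξ - ζΓ).re| := by rw [hre]
        _ ≤ ‖ξ - ζΓ‖ := Complex.abs_re_le_norm _
        _ = ‖ξ - ζΓ‖ := rfl
    have hu : (|s| + d) / 3 ≤ r := by linarith
    have hu0 : 0 < |s| + d := by positivity
    have hsq : Real.sqrt (1 + deriv f (s + xΓ) ^ 2) ≤ 1 + K := by
      rw [show (1:ℝ) + K = Real.sqrt ((1 + K) ^ 2) from (Real.sqrt_sq (by linarith)).symm]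
      apply Real.sqrt_le_sqrt
      nlinarith [hK (s + xΓ), abs_nonneg (deriv f (s + xΓ)), sq_abs (deriv f (s + xΓ))]
    have hpow2 : (r : ℝ) ^ (2 : ℕ) = r ^ ((2 : ℕ) : ℝ) := (Real.rpow_natCast r 2).symm
    have hdiv : r ^ α / r ^ (2 : ℕ) = r ^ (α - 2) := by
      rw [hpow2, ← Real.rpow_sub hr0]; norm_num
    have h23 : (2:ℝ) ^ α * 3 ^ (2 - α) ≤ 9 := by
      have h1 : (2:ℝ) ^ α ≤ 3 ^ α := Real.rpow_le_rpow (by norm_num) (by norm_num) hα0.le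
      have h2 : (3:ℝ) ^ α * 3 ^ (2 - α) = 9 := by
        rw [← Real.rpow_add (by norm_num)]
        norm_num
      nlinarith [Real.rpow_nonneg (show (0:ℝ) ≤ 3 by norm_num) (2 - α),
        Real.rpow_nonneg (show (0:ℝ) ≤ 2 by norm_num) α]
    calc ‖ξ - ζΓ‖ ^ α / r ^ 2 * Real.sqrt (1 + deriv f (s + xΓ) ^ 2)
        ≤ (2 * r) ^ α / r ^ 2 * (1 + K) := by
          apply mul_le_mul _ hsq (Real.sqrt_nonneg _) (by positivity)
          apply div_le_div_of_nonneg_right _ (by positivity)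
          exact Real.rpow_le_rpow (norm_nonneg _) ht2 hα0.le
      _ = 2 ^ α * (r ^ α / r ^ 2) * (1 + K) := by
          rw [Real.mul_rpow (by norm_num) hr0.le]; ring
      _ = 2 ^ α * r ^ (α - 2) * (1 + K) := by rw [hdiv]
      _ ≤ 2 ^ α * ((|s| + d) / 3) ^ (α - 2) * (1 + K) := by
          apply mul_le_mul_of_nonneg_right _ (by linarith)
          apply mul_le_mul_of_nonneg_left _ (Real.rpow_nonneg (by norm_num) _)
          exact Real.rpow_le_rpow_of_nonpos (by positivity) hu (by linarith)
      _ = (2 ^ α * 3 ^ (2 - α)) * (|s| + d) ^ (α - 2) * (1 + K) := by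
          rw [Real.div_rpow hu0.le (by norm_num), div_eq_mul_inv,
            ← Real.rpow_neg (by norm_num), show -(α - 2) = 2 - α by ring]
          ring
      _ ≤ 9 * (|s| + d) ^ (α - 2) * (1 + K) := by
          apply mul_le_mul_of_nonneg_right _ (by linarith)
          exact mul_le_mul_of_nonneg_right h23 (Real.rpow_nonneg hu0.le _)
      _ = 9 * (1 + K) * (|s| + d) ^ (α - 2) := by ring
  constructor
  · have hint : Integrable (fun s : ℝ => 9 * (1 + K) * (|s| + d) ^ (α - 2)) :=
      (abs_integrable' hd0 ha2).const_mul _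
    have hnn : ∀ s : ℝ, (0:ℝ) ≤
        (‖planePt (s + xΓ) (f (s + xΓ)) - ζΓ‖ ^ α
            / ‖planePt (s + xΓ) (f (s + xΓ)) - ζ‖ ^ 2)
          * Real.sqrt (1 + deriv f (s + xΓ) ^ 2) := by
      intro s; positivity
    have := integral_mono_of_nonneg (ae_of_all _ hnn) hint (ae_of_all _ hptwise)
    rwa [integral_const_mul] at this
  · rw [abs_integral' hd0 ha2, show α - 2 + 1 = α - 1 by ring]
    have h1α : (1:ℝ) - α ≠ 0 := sub_ne_zero.mpr (by linarith : (1:ℝ) ≠ α)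
    have h2α : α - 1 ≠ 0 := sub_ne_zero.mpr (ne_of_lt hα1)
    field_simp
    ring
end
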